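/- arXiv:1805.04456 — 2 statements merged into one kernel-verified Lean document; each statement's English description precedes it below -/
import Mathlib

section
/- Let (X, m) be a measure space, H a separable real Hilbert space and 1 < p < ∞. For u, φ ∈ L^p(m; H) the function t ↦ ∫_X ‖u(x) + tφ(x)‖_H^p m(dx) is differentiable at t = 0 with derivative p ∫_X ‖u(x)‖_H^{p−2} ⟨u(x), φ(x)⟩_H m(dx), where the integrand is interpreted as 0 at points x with u(x) = 0. -/
open MeasureTheory
open scoped Classical

theorem hasDerivAt_Lp_norm_pow_integral
    {X H : Type*} [MeasurableSpace X] (m : Measure X)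
    [NormedAddCommGroup H] [InnerProductSpace ℝ H]
    [TopologicalSpace.SeparableSpace H]
    (p : ℝ) (hp1 : 1 < p) [Fact (1 ≤ ENNReal.ofReal p)]
    (u φ : Lp H (ENNReal.ofReal p) m) :
    HasDerivAt (fun t : ℝ => ∫ x, ‖u x + t • φ x‖ ^ p ∂m)
      (p * ∫ x, (if u x = 0 then (0 : ℝ)
        else ‖u x‖ ^ (p - 2) * (inner ℝ (u x) (φ x) : ℝ)) ∂m) 0 := by
  have hp0 : (0:ℝ) < p := lt_trans one_pos hp1
  have hP0 : ENNReal.ofReal p ≠ 0 := by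
    simp [ENNReal.ofReal_eq_zero, not_le, hp0]
  have hPtop : ENNReal.ofReal p ≠ ⊤ := ENNReal.ofReal_ne_top
  have hPto : (ENNReal.ofReal p).toReal = p := ENNReal.toReal_ofReal hp0.le
  set F : ℝ → X → ℝ := fun t x => ‖u x + t • φ x‖ ^ p with hF
  set F' : ℝ → X → ℝ := fun t x =>
    p * ‖u x + t • φ x‖ ^ (p - 2) * (inner ℝ (u x + t • φ x) (φ x) : ℝ) with hF'
  have hu := Lp.aestronglyMeasurable u
  have hφ := Lp.aestronglyMeasurable φ
  -- pointwise derivative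
  have key : ∀ (t : ℝ) (x : X), HasDerivAt (fun s => F s x) (F' t x) t := by
    intro t x
    have h1 : HasDerivAt (fun s : ℝ => u x + s • φ x) (φ x) t := by
      simpa using ((hasDerivAt_id t).smul_const (φ x)).const_add (u x)
    have h2 := (hasFDerivAt_norm_rpow (u x + t • φ x) hp1).comp_hasDerivAt t h1
    simpa only [hF, hF', Function.comp_def, ContinuousLinearMap.smul_apply, innerSL_apply_apply,
      smul_eq_mul, mul_assoc] using h2
  -- measurability
  have hmeas : ∀ t : ℝ, AEStronglyMeasurable (F t) m := by
    intro t
    exact ((hu.add (hφ.const_smul t)).norm.aemeasurable.pow_const p).aestronglyMeasurable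
  have hmeas' : ∀ t : ℝ, AEStronglyMeasurable (F' t) m := by
    intro t
    have hv : AEStronglyMeasurable (fun x => u x + t • φ x) m := hu.add (hφ.const_smul t)
    exact (((hv.norm.aemeasurable.pow_const (p - 2)).const_mul p).aestronglyMeasurable).mul
      (hv.inner hφ)
  -- integrability of F 0
  have hF_int : Integrable (F 0) m := by
    have h := (Lp.memLp u).integrable_norm_rpow hP0 hPtop
    rw [hPto] at h
    exact h.congr (Filter.Eventually.of_forall (by intro x; simp [hF]))
  -- the dominating function
  set bound : X → ℝ := fun x => p * ((‖u x‖ + ‖φ x‖) ^ (p - 1) * ‖φ x‖) with hbd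
  have h_bound : ∀ᵐ x ∂m, ∀ t ∈ Metric.ball (0:ℝ) 1, ‖F' t x‖ ≤ bound x := by
    refine Filter.Eventually.of_forall fun x => fun t ht => ?_
    have hbd_nonneg : 0 ≤ bound x := by
      have h0 : (0:ℝ) ≤ (‖u x‖ + ‖φ x‖) ^ (p - 1) := Real.rpow_nonneg (by positivity) _
      have h1 : (0:ℝ) ≤ ‖φ x‖ := norm_nonneg _
      simp only [hbd]
      positivity
    by_cases hv0 : u x + t • φ x = 0
    · simp [hF', hv0, hbd_nonneg]
    · have hvpos : 0 < ‖u x + t • φ x‖ := norm_pos_iff.mpr hv0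
      have habs : ‖F' t x‖ =
          p * ‖u x + t • φ x‖ ^ (p - 2) * |(inner ℝ (u x + t • φ x) (φ x) : ℝ)| := by
        simp only [hF']
        rw [Real.norm_eq_abs, abs_mul, abs_mul]
        rw [abs_of_nonneg hp0.le, abs_of_nonneg (Real.rpow_nonneg (norm_nonneg _) _)]
      rw [habs]
      have hCS : |(inner ℝ (u x + t • φ x) (φ x) : ℝ)| ≤ ‖u x + t • φ x‖ * ‖φ x‖ :=
        abs_real_inner_le_norm _ _
      calc p * ‖u x + t • φ x‖ ^ (p - 2) * |(inner ℝ (u x + t • φ x) (φ x) : ℝ)|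
          ≤ p * ‖u x + t • φ x‖ ^ (p - 2) * (‖u x + t • φ x‖ * ‖φ x‖) := by
            apply mul_le_mul_of_nonneg_left hCS
            exact mul_nonneg hp0.le (Real.rpow_nonneg (norm_nonneg _) _)
        _ = p * (‖u x + t • φ x‖ ^ (p - 1) * ‖φ x‖) := by
            rw [mul_assoc, ← mul_assoc (‖u x + t • φ x‖ ^ (p - 2))]
            congr 2
            rw [show (‖u x + t • φ x‖ : ℝ) ^ (p - 2) * ‖u x + t • φ x‖
                = ‖u x + t • φ x‖ ^ (p - 2) * ‖u x + t • φ x‖ ^ (1:ℝ) from by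
              rw [Real.rpow_one]]
            rw [← Real.rpow_add hvpos]
            congr 1
            ring
        _ ≤ bound x := by
            simp only [hbd]
            apply mul_le_mul_of_nonneg_left _ hp0.le
            apply mul_le_mul_of_nonneg_right _ (norm_nonneg _)
            apply Real.rpow_le_rpow (norm_nonneg _) _ (by linarith)
            calc ‖u x + t • φ x‖ ≤ ‖u x‖ + ‖t • φ x‖ := norm_add_le _ _
              _ = ‖u x‖ + |t| * ‖φ x‖ := by rw [norm_smul, Real.norm_eq_abs]
              _ ≤ ‖u x‖ + 1 * ‖φ x‖ := by
                  have ht1 : |t| ≤ 1 := by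
                    have h2 := Metric.mem_ball.mp ht
                    simp only [Real.dist_eq, sub_zero] at h2
                    linarith
                  gcongr
              _ = ‖u x‖ + ‖φ x‖ := by ring
  -- integrability of the bound, via Hölder
  have bound_int : Integrable bound m := by
    have hg : MemLp (fun x => ‖u x‖ + ‖φ x‖) (ENNReal.ofReal p) m :=
      ((Lp.memLp u).norm.add (Lp.memLp φ).norm)
    set Q : ENNReal := ENNReal.ofReal (p - 1) with hQ
    have hQ0 : Q ≠ 0 := by
      simp only [hQ, ne_eq, ENNReal.ofReal_eq_zero, not_le]; linarith
    have hQtop : Q ≠ ⊤ := ENNReal.ofReal_ne_top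
    have h1 : MemLp (fun x => (‖u x‖ + ‖φ x‖) ^ (p - 1)) (ENNReal.ofReal p / Q) m := by
      have h := hg.norm_rpow_div Q
      rw [show Q.toReal = p - 1 from ENNReal.toReal_ofReal (by linarith)] at h
      refine h.ae_eq (Filter.Eventually.of_forall fun x => ?_)
      rw [Real.norm_eq_abs, abs_of_nonneg (by positivity)]
    have hQ1 : Q + 1 = ENNReal.ofReal p := by
      rw [hQ, ← ENNReal.ofReal_one, ← ENNReal.ofReal_add (by linarith) zero_le_one]
      norm_num
    have hsum : (1:ENNReal) / 1 = 1 / (ENNReal.ofReal p / Q) + 1 / ENNReal.ofReal p := by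
      have hdiv : (1:ENNReal) / (ENNReal.ofReal p / Q) = Q / ENNReal.ofReal p := by
        rw [one_div, ENNReal.inv_div (Or.inl hQtop) (Or.inl hQ0)]
      rw [hdiv, ENNReal.div_add_div_same, hQ1, ENNReal.div_self hP0 hPtop]
      simp
    have h2 : MemLp ((fun x => (‖u x‖ + ‖φ x‖) ^ (p - 1)) • (fun x => ‖φ x‖)) 1 m :=
      MemLp.smul (Lp.memLp φ).norm h1 (hpqr := ⟨by simpa [one_div] using hsum.symm⟩)
    have h3 : Integrable (fun x => (‖u x‖ + ‖φ x‖) ^ (p - 1) * ‖φ x‖) m := by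
      have h4 := memLp_one_iff_integrable.mp h2
      simpa [Pi.smul_apply, smul_eq_mul, Pi.mul_def] using h4
    exact h3.const_mul p
  -- apply differentiation under the integral sign
  have main := hasDerivAt_integral_of_dominated_loc_of_deriv_le (μ := m) (F := F) (F' := F')
    (x₀ := (0:ℝ)) (bound := bound) (Metric.ball_mem_nhds _ one_pos) (Filter.Eventually.of_forall hmeas) hF_int
    (hmeas' 0) h_bound bound_int
    (Filter.Eventually.of_forall fun x t _ => key t x)
  have hval : ∫ x, F' 0 x ∂m = p * ∫ x, (if u x = 0 then (0 : ℝ)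
      else ‖u x‖ ^ (p - 2) * (inner ℝ (u x) (φ x) : ℝ)) ∂m := by
    rw [← integral_const_mul]
    apply integral_congr_ae
    refine Filter.Eventually.of_forall fun x => ?_
    by_cases h : u x = 0
    · simp [hF', h]
    · simp [hF', h, mul_assoc]
  rw [← hval]
  exact main.2
end

section
/- Let (X, m) be a measure space, H a separable real Hilbert space, 1 < p < ∞, E a real normed space, T : E → L^p(m; H) a continuous linear operator, and S ⊆ E a linear subspace. Suppose u ∈ E satisfies ∫_X ‖(Tu)(x)‖_H^p m(dx) ≤ ∫_X ‖(T(u + φ))(x)‖_H^p m(dx) for all φ ∈ S. Then for every φ ∈ S one has ∫_X ‖(Tu)(x)‖_H^{p−2} ⟨(Tu)(x), (Tφ)(x)⟩_H m(dx) = 0, where the integrand is interpreted as 0 at points x with (Tu)(x) = 0. -/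
open MeasureTheory Filter
open scoped ENNReal NNReal
open scoped Classical

section Aux

variable {H : Type*} [NormedAddCommGroup H] [InnerProductSpace ℝ H]

lemma aux_ineq {p : ℝ} (hp : 1 ≤ p) (v w : H) :
    ‖v‖ ^ p + p * (‖v‖ ^ (p - 2) * (inner ℝ v w : ℝ)) ≤ ‖v + w‖ ^ p := by
  have hp0 : (0 : ℝ) < p := lt_of_lt_of_le one_pos hp
  by_cases hv : v = 0
  · simp only [hv, norm_zero, inner_zero_left, mul_zero, add_zero, zero_add]
    rw [Real.zero_rpow hp0.ne']
    positivity
  · set r : ℝ := ‖v‖ with hr_def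
    have hr : 0 < r := norm_pos_iff.mpr hv
    set s : ℝ := ‖v + w‖ with hs_def
    have hs0 : 0 ≤ s := norm_nonneg _
    have hCS : (inner ℝ v (v + w) : ℝ) ≤ r * s := real_inner_le_norm _ _
    have hiv : (inner ℝ v w : ℝ) = (inner ℝ v (v + w) : ℝ) - r * r := by
      rw [inner_add_right, real_inner_self_eq_norm_mul_norm]; ring
    have e2 : r ^ (p - 2) * r = r ^ (p - 1) := by
      rw [← Real.rpow_add_one hr.ne' (p - 2)]; ring_nf
    have e1 : r ^ (p - 1) * r = r ^ p := by
      rw [← Real.rpow_add_one hr.ne' (p - 1)]; ring_nf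
    have hrp : (0 : ℝ) < r ^ p := Real.rpow_pos_of_pos hr p
    have hsub : -1 ≤ s / r - 1 := by
      have : 0 ≤ s / r := div_nonneg hs0 hr.le
      linarith
    have hb := one_add_mul_self_le_rpow_one_add hsub hp
    rw [show (1 : ℝ) + (s / r - 1) = s / r by ring, Real.div_rpow hs0 hr.le] at hb
    have h := mul_le_mul_of_nonneg_left hb hrp.le
    have hrhs : r ^ p * (s ^ p / r ^ p) = s ^ p := by field_simp
    rw [hrhs] at h
    have e5 : r ^ p * (s / r) = r ^ (p - 1) * s := by
      rw [← e1]; field_simp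
    have hlhs : r ^ p * (1 + p * (s / r - 1)) = r ^ p + p * (r ^ p * (s / r) - r ^ p) := by
      ring
    have key : r ^ p + p * (r ^ (p - 1) * s - r ^ p) ≤ s ^ p := by
      rw [← e5, ← hlhs]; exact h
    have hnn : (0 : ℝ) ≤ r ^ (p - 2) := Real.rpow_nonneg hr.le _
    have h6 : r ^ (p - 2) * (inner ℝ v (v + w) : ℝ) ≤ r ^ (p - 2) * (r * s) :=
      mul_le_mul_of_nonneg_left hCS hnn
    have h5 : r ^ (p - 2) * (inner ℝ v w : ℝ) ≤ r ^ (p - 1) * s - r ^ p :=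
      calc r ^ (p - 2) * (inner ℝ v w : ℝ)
          = r ^ (p - 2) * (inner ℝ v (v + w) : ℝ) - (r ^ (p - 2) * r) * r := by rw [hiv]; ring
        _ ≤ r ^ (p - 2) * (r * s) - (r ^ (p - 2) * r) * r := by linarith
        _ = (r ^ (p - 2) * r) * s - (r ^ (p - 2) * r) * r := by ring
        _ = r ^ (p - 1) * s - r ^ (p - 1) * r := by rw [e2]
        _ = r ^ (p - 1) * s - r ^ p := by rw [e1]
    have h7 := mul_le_mul_of_nonneg_left h5 hp0.le
    linarith

lemma aux_bound {p : ℝ} (hp : 1 ≤ p) (v w : H) :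
    |‖v‖ ^ (p - 2) * (inner ℝ v w : ℝ)| ≤ ‖v‖ ^ (p - 1) * ‖w‖ := by
  by_cases hv : v = 0
  · simp only [hv, inner_zero_left, mul_zero, abs_zero]
    positivity
  · have hr : (0 : ℝ) < ‖v‖ := norm_pos_iff.mpr hv
    have e2 : ‖v‖ ^ (p - 2) * ‖v‖ = ‖v‖ ^ (p - 1) := by
      rw [← Real.rpow_add_one hr.ne' (p - 2)]; ring_nf
    rw [abs_mul, abs_of_nonneg (Real.rpow_nonneg (norm_nonneg v) _)]
    calc ‖v‖ ^ (p - 2) * |(inner ℝ v w : ℝ)|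
        ≤ ‖v‖ ^ (p - 2) * (‖v‖ * ‖w‖) :=
          mul_le_mul_of_nonneg_left (abs_real_inner_le_norm _ _)
            (Real.rpow_nonneg (norm_nonneg v) _)
      _ = ‖v‖ ^ (p - 1) * ‖w‖ := by rw [← e2]; ring

lemma aux_tendsto {p : ℝ} (hp : 1 < p) (v w : H) :
    Tendsto (fun t : ℝ => ‖v + t • w‖ ^ (p - 2) * (inner ℝ (v + t • w) w : ℝ)) (nhds 0)
      (nhds (‖v‖ ^ (p - 2) * (inner ℝ v w : ℝ))) := by
  by_cases hv : v = 0
  · simp only [hv, zero_add, norm_zero, inner_zero_left, mul_zero]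
    apply squeeze_zero_norm (a := fun t : ℝ => ‖t • w‖ ^ (p - 1) * ‖w‖)
    · intro t
      rw [Real.norm_eq_abs]
      exact aux_bound hp.le (t • w) w
    · have h1 : Tendsto (fun t : ℝ => ‖t • w‖) (nhds 0) (nhds 0) := by
        have hc : Continuous fun t : ℝ => ‖t • w‖ := (continuous_id.smul continuous_const).norm
        exact hc.tendsto' 0 0 (by simp)
      have h2 := h1.rpow_const (p := p - 1) (Or.inr (by linarith))
      rw [Real.zero_rpow (by intro h; linarith [sub_eq_zero.mp h] : p - 1 ≠ 0)] at h2
      simpa using h2.mul_const ‖w‖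
  · have hinner : Tendsto (fun t : ℝ => v + t • w) (nhds 0) (nhds v) :=
      (continuous_const.add (continuous_id.smul continuous_const)).tendsto' 0 v (by simp)
    have houter : ContinuousAt (fun y : H => ‖y‖ ^ (p - 2) * (inner ℝ y w : ℝ)) v := by
      refine ContinuousAt.mul ?_ ?_
      · exact continuous_norm.continuousAt.rpow_const (Or.inl (norm_ne_zero_iff.mpr hv))
      · exact (continuous_id.inner continuous_const).continuousAt
    have := houter.tendsto.comp hinner
    exact this

end Aux

theorem euler_lagrange_of_p_energy_minimizer
    {X H E : Type*} [MeasurableSpace X] (m : Measure X)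
    [NormedAddCommGroup H] [InnerProductSpace ℝ H]
    [TopologicalSpace.SeparableSpace H]
    [NormedAddCommGroup E] [NormedSpace ℝ E]
    (p : ℝ) (hp1 : 1 < p) [Fact (1 ≤ ENNReal.ofReal p)]
    (T : E →L[ℝ] Lp H (ENNReal.ofReal p) m)
    (S : Submodule ℝ E) (u : E)
    (hmin : ∀ φ ∈ S, ∫ x, ‖T u x‖ ^ p ∂m ≤ ∫ x, ‖T (u + φ) x‖ ^ p ∂m) :
    ∀ φ ∈ S,
      ∫ x, (if T u x = 0 then (0 : ℝ)
        else ‖T u x‖ ^ (p - 2) * (inner ℝ (T u x) (T φ x) : ℝ)) ∂m = 0 := by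
  intro φ hφ
  have hp0 : (0 : ℝ) < p := lt_trans one_pos hp1
  set P : ℝ≥0∞ := ENNReal.ofReal p with hPdef
  have hP0 : P ≠ 0 := by
    simp only [hPdef, ne_eq, ENNReal.ofReal_eq_zero, not_le]; linarith
  have hPtop : P ≠ ∞ := ENNReal.ofReal_ne_top
  have hPtoReal : P.toReal = p := ENNReal.toReal_ofReal hp0.le
  set a : X → H := ⇑(T u) with ha_def
  set b : X → H := ⇑(T φ) with hb_def
  have ha : MemLp a P m := by rw [ha_def]; exact Lp.memLp _
  have hb : MemLp b P m := by rw [hb_def]; exact Lp.memLp _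
  -- measurability
  have hmeas : ∀ t : ℝ, AEStronglyMeasurable
      (fun x => ‖a x + t • b x‖ ^ (p - 2) * (inner ℝ (a x + t • b x) (b x) : ℝ)) m := by
    intro t
    have hft : AEStronglyMeasurable (fun x => a x + t • b x) m := ha.1.add (hb.1.const_smul t)
    have h1 : AEMeasurable (fun x => ‖a x + t • b x‖ ^ (p - 2)) m :=
      hft.norm.aemeasurable.pow_const _
    have h2 : AEStronglyMeasurable (fun x => (inner ℝ (a x + t • b x) (b x) : ℝ)) m :=
      hft.inner hb.1
    exact (h1.mul h2.aemeasurable).aestronglyMeasurable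
  -- integrable bound
  set B : X → ℝ := fun x => (‖a x‖ + ‖b x‖) ^ (p - 1) * ‖b x‖ with hB_def
  have hBint : Integrable B m := by
    set Q : ℝ≥0∞ := ENNReal.ofReal (p - 1) with hQdef
    have hQ0 : Q ≠ 0 := by
      simp only [hQdef, ne_eq, ENNReal.ofReal_eq_zero, not_le]; linarith
    have hQtop : Q ≠ ∞ := ENNReal.ofReal_ne_top
    have hQP : Q + 1 = P := by
      rw [hQdef, hPdef, ← ENNReal.ofReal_one, ← ENNReal.ofReal_add (by linarith) zero_le_one]
      norm_num
    have hA : MemLp (fun x => ‖a x‖ + ‖b x‖) P m := ha.norm.add hb.norm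
    have h1 := hA.norm_rpow_div Q
    have htr : Q.toReal = p - 1 := ENNReal.toReal_ofReal (by linarith)
    have hfe : (fun x => ‖‖a x‖ + ‖b x‖‖ ^ Q.toReal)
        = fun x => (‖a x‖ + ‖b x‖) ^ (p - 1) := by
      funext x; rw [htr, Real.norm_of_nonneg (by positivity)]
    rw [hfe] at h1
    have hdivPQ : (1 : ℝ≥0∞) / (P / Q) = Q / P := by
      rw [one_div, ENNReal.inv_div (Or.inl hQtop) (Or.inl hQ0)]
    have hcond : (1 : ℝ≥0∞) / 1 = 1 / (P / Q) + 1 / P := by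
      rw [hdivPQ, ENNReal.div_add_div_same, hQP, ENNReal.div_self hP0 hPtop]
      simp
    have hmul : MemLp ((fun x => (‖a x‖ + ‖b x‖) ^ (p - 1)) • fun x => ‖b x‖) 1 m :=
      hb.norm.smul h1 (hpqr := ⟨by simpa only [one_div] using hcond.symm⟩)
    have hBeq : B = (fun x => (‖a x‖ + ‖b x‖) ^ (p - 1)) • fun x => ‖b x‖ := by
      funext x; simp [hB_def, smul_eq_mul]
    rw [hBeq]
    exact memLp_one_iff_integrable.mp hmul
  -- pointwise bound
  have hble : ∀ t : ℝ, |t| ≤ 1 → ∀ x,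
      ‖‖a x + t • b x‖ ^ (p - 2) * (inner ℝ (a x + t • b x) (b x) : ℝ)‖ ≤ B x := by
    intro t ht x
    rw [Real.norm_eq_abs]
    refine (aux_bound hp1.le _ _).trans ?_
    have h1 : ‖a x + t • b x‖ ≤ ‖a x‖ + ‖b x‖ := by
      refine (norm_add_le _ _).trans (add_le_add le_rfl ?_)
      rw [norm_smul, Real.norm_eq_abs]
      calc |t| * ‖b x‖ ≤ 1 * ‖b x‖ := mul_le_mul_of_nonneg_right ht (norm_nonneg _)
        _ = ‖b x‖ := one_mul _
    simp only [hB_def]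
    exact mul_le_mul_of_nonneg_right
      (Real.rpow_le_rpow (norm_nonneg _) h1 (by linarith)) (norm_nonneg _)
  have hInt : ∀ t : ℝ, |t| ≤ 1 → Integrable
      (fun x => ‖a x + t • b x‖ ^ (p - 2) * (inner ℝ (a x + t • b x) (b x) : ℝ)) m :=
    fun t ht => hBint.mono' (hmeas t) (ae_of_all _ (hble t ht))
  set G : ℝ → ℝ :=
    fun t => ∫ x, ‖a x + t • b x‖ ^ (p - 2) * (inner ℝ (a x + t • b x) (b x) : ℝ) ∂m with hG_def
  -- sign of G
  have hsign : ∀ t : ℝ, |t| ≤ 1 → 0 ≤ p * t * G t := by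
    intro t ht
    have hTeq : (⇑(T (u + t • φ)) : X → H) =ᵐ[m] fun x => a x + t • b x := by
      rw [ha_def, hb_def, map_add, T.map_smul]
      filter_upwards [Lp.coeFn_add (T u) (t • T φ), Lp.coeFn_smul t (T φ)] with x h1 h2
      rw [h1, Pi.add_apply, h2]
      rfl
    have hF : ∫ x, ‖T (u + t • φ) x‖ ^ p ∂m = ∫ x, ‖a x + t • b x‖ ^ p ∂m :=
      integral_congr_ae (hTeq.mono fun x hx => by simp only [hx])
    have hmin' := hmin _ (S.smul_mem t hφ)
    rw [hF] at hmin'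
    have hft : MemLp (fun x => a x + t • b x) P m := ha.add (hb.const_smul t)
    have hIp : Integrable (fun x => ‖a x + t • b x‖ ^ p) m := by
      have h := hft.integrable_norm_rpow hP0 hPtop; rwa [hPtoReal] at h
    have hIa : Integrable (fun x => ‖a x‖ ^ p) m := by
      have h := ha.integrable_norm_rpow hP0 hPtop; rwa [hPtoReal] at h
    have hpt : ∀ x, ‖a x + t • b x‖ ^ p
        - p * t * (‖a x + t • b x‖ ^ (p - 2) * (inner ℝ (a x + t • b x) (b x) : ℝ))
        ≤ ‖a x‖ ^ p := by
      intro x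
      have h := aux_ineq hp1.le (a x + t • b x) (-(t • b x))
      rw [inner_neg_right, real_inner_smul_right, add_neg_cancel_right] at h
      have heq : ‖a x + t • b x‖ ^ p
          - p * t * (‖a x + t • b x‖ ^ (p - 2) * (inner ℝ (a x + t • b x) (b x) : ℝ))
          = ‖a x + t • b x‖ ^ p
          + p * (‖a x + t • b x‖ ^ (p - 2) * -(t * (inner ℝ (a x + t • b x) (b x) : ℝ))) := by
        ring
      rw [heq]
      exact h
    have hint2 : ∫ x, (‖a x + t • b x‖ ^ p
        - p * t * (‖a x + t • b x‖ ^ (p - 2) * (inner ℝ (a x + t • b x) (b x) : ℝ))) ∂m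
        ≤ ∫ x, ‖a x‖ ^ p ∂m :=
      integral_mono (hIp.sub ((hInt t ht).const_mul (p * t))) hIa hpt
    rw [integral_sub hIp ((hInt t ht).const_mul (p * t)), integral_const_mul] at hint2
    simp only [hG_def]
    linarith
  -- continuity along sequences
  have hseq : ∀ s : ℕ → ℝ, (∀ n, |s n| ≤ 1) → Tendsto s atTop (nhds 0) →
      Tendsto (fun n => G (s n)) atTop (nhds (G 0)) := by
    intro s hs1 hs0
    simp only [hG_def]
    refine tendsto_integral_of_dominated_convergence B (fun n => hmeas (s n)) hBint
      (fun n => ae_of_all _ (hble (s n) (hs1 n))) (ae_of_all _ ?_)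
    intro x
    have h := (aux_tendsto hp1 (a x) (b x)).comp hs0
    simp only [zero_smul, add_zero]
    exact h
  have habs : ∀ n : ℕ, |1 / ((n : ℝ) + 1)| ≤ 1 := by
    intro n
    rw [abs_of_nonneg (by positivity), div_le_one (by positivity)]
    linarith [Nat.cast_nonneg (α := ℝ) n]
  have hpos : 0 ≤ G 0 := by
    have htend := hseq (fun n => 1 / ((n : ℝ) + 1)) habs
      tendsto_one_div_add_atTop_nhds_zero_nat
    refine ge_of_tendsto htend (Eventually.of_forall fun n => ?_)
    have ht : (0 : ℝ) < 1 / ((n : ℝ) + 1) := by positivity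
    have h := hsign _ (habs n)
    nlinarith [mul_pos hp0 ht]
  have hneg : G 0 ≤ 0 := by
    have htend := hseq (fun n => -(1 / ((n : ℝ) + 1)))
      (fun n => by rw [abs_neg]; exact habs n)
      (by simpa using (tendsto_one_div_add_atTop_nhds_zero_nat (𝕜 := ℝ)).neg)
    refine le_of_tendsto htend (Eventually.of_forall fun n => ?_)
    have ht : -(1 / ((n : ℝ) + 1)) < 0 := by
      have : (0 : ℝ) < 1 / ((n : ℝ) + 1) := by positivity
      linarith
    have h := hsign _ (by rw [abs_neg]; exact habs n)
    nlinarith [mul_neg_of_pos_of_neg hp0 ht]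
  have hG0 : G 0 = 0 := le_antisymm hneg hpos
  have hpt_eq : ∀ x, (if a x = 0 then (0 : ℝ)
      else ‖a x‖ ^ (p - 2) * (inner ℝ (a x) (b x) : ℝ))
      = ‖a x + (0 : ℝ) • b x‖ ^ (p - 2) * (inner ℝ (a x + (0 : ℝ) • b x) (b x) : ℝ) := by
    intro x
    rw [zero_smul, add_zero]
    split_ifs with h
    · rw [h]; simp
    · rfl
  rw [integral_congr_ae (ae_of_all m hpt_eq)]
  rw [hG_def] at hG0
  exact hG0
end
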